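/- Let β > 0 and p ∈ (1,2), and define γ : [0,∞) → ℝ by γ(V) = 4β·2^{1−1/p}·V^{2−2/p} / ((2V)^{1−1/p} + β)² for V > 0 and γ(0) = 0. Then γ is continuous, strictly increasing on [0,∞), satisfies 0 < γ(V) < 4β/2^{1−1/p} for every V > 0, and sup_{V>0} γ(V) = 4β/2^{1−1/p}. In particular, γ is a class-K function of V that is not class-K∞ (it is bounded above). -/

import Mathlib

/-- The Lyapunov-difference gain γ of eqs. (24)-(25). -/
noncomputable def gamFun (β p V : ℝ) : ℝ :=
  if V = 0 then 0
  else 4 * β * (2:ℝ) ^ (1 - 1 / p) * V ^ (2 - 2 / p) / ((2 * V) ^ (1 - 1 / p) + β) ^ 2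

/-- γ is a class-K function of V that is bounded above (not class-K∞):
continuous, strictly increasing on [0,∞), 0 < γ(V) < 4β/2^{1-1/p} for V > 0,
with supremum 4β/2^{1-1/p}. -/
theorem stmt_5 (β p : ℝ) (hβ : 0 < β) (hp : p ∈ Set.Ioo (1:ℝ) 2) :
    ContinuousOn (gamFun β p) (Set.Ici 0) ∧
    StrictMonoOn (gamFun β p) (Set.Ici 0) ∧
    (∀ V : ℝ, 0 < V → 0 < gamFun β p V ∧ gamFun β p V < 4 * β / (2:ℝ) ^ (1 - 1 / p)) ∧
    IsLUB (gamFun β p '' Set.Ioi 0) (4 * β / (2:ℝ) ^ (1 - 1 / p)) := by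
  obtain ⟨hp1, hp2⟩ := hp
  have hp0 : (0:ℝ) < p := lt_trans one_pos hp1
  set q : ℝ := 1 - 1 / p with hqdef
  have hq0 : 0 < q := by
    have : 1 / p < 1 := by rw [div_lt_one hp0]; exact hp1
    simp only [hqdef]; linarith
  set C : ℝ := 4 * β / (2:ℝ) ^ q with hCdef
  have h2q : (0:ℝ) < (2:ℝ) ^ q := Real.rpow_pos_of_pos two_pos q
  have hC : 0 < C := div_pos (by linarith) h2q
  -- w V := (2V)^q
  set w : ℝ → ℝ := fun V => (2 * V) ^ q with hwdef
  have hwnn : ∀ V : ℝ, 0 ≤ V → 0 ≤ w V := fun V hV =>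
    Real.rpow_nonneg (by linarith) q
  have hwpos : ∀ V : ℝ, 0 < V → 0 < w V := fun V hV =>
    Real.rpow_pos_of_pos (by linarith) q
  have hden : ∀ V : ℝ, 0 ≤ V → 0 < w V + β := fun V hV => by
    have := hwnn V hV; linarith
  -- key formula
  have key : ∀ V : ℝ, 0 ≤ V → gamFun β p V = C * (w V / (w V + β)) ^ 2 := by
    intro V hV
    rcases eq_or_lt_of_le hV with h0 | h0
    · rw [← h0]
      simp only [gamFun, if_pos rfl, hwdef]
      rw [mul_zero, Real.zero_rpow hq0.ne']
      simp
    · have hVne : V ≠ 0 := h0.ne'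
      have hmul : (2 * V) ^ q = (2:ℝ) ^ q * V ^ q :=
        Real.mul_rpow (by norm_num) h0.le
      have hV2q : V ^ (2 - 2 / p) = V ^ q * V ^ q := by
        have : 2 - 2 / p = q + q := by simp only [hqdef]; ring
        rw [this, Real.rpow_add h0]
      have hd : (2:ℝ) ^ q * V ^ q + β ≠ 0 := by positivity
      have h2q' : ((2:ℝ) ^ q) ≠ 0 := h2q.ne'
      simp only [gamFun, if_neg hVne, hwdef]
      rw [← hqdef, hV2q, hmul, hCdef]
      field_simp
  -- continuity of the closed form
  have hwcont : ContinuousOn w (Set.Ici 0) := by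
    apply ContinuousOn.rpow_const
    · exact (continuous_const.mul continuous_id).continuousOn
    · intro x _; right; exact hq0.le
  have hgcont : ContinuousOn (fun V => C * (w V / (w V + β)) ^ 2) (Set.Ici 0) := by
    apply ContinuousOn.mul continuousOn_const
    apply ContinuousOn.pow
    exact ContinuousOn.div hwcont (hwcont.add continuousOn_const)
      (fun x hx => (hden x hx).ne')
  have hcont : ContinuousOn (gamFun β p) (Set.Ici 0) :=
    ContinuousOn.congr hgcont (fun x hx => key x hx)
  -- ratio basics
  have hr01 : ∀ V : ℝ, 0 ≤ V → w V / (w V + β) < 1 := by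
    intro V hV
    rw [div_lt_one (hden V hV)]
    linarith
  have hrnn : ∀ V : ℝ, 0 ≤ V → 0 ≤ w V / (w V + β) := fun V hV =>
    div_nonneg (hwnn V hV) (hden V hV).le
  -- strict monotonicity
  have hmono : StrictMonoOn (gamFun β p) (Set.Ici 0) := by
    intro x hx y hy hxy
    rw [key x hx, key y hy]
    have hwxy : w x < w y := by
      apply Real.rpow_lt_rpow (by simp at hx; linarith) (by linarith) hq0
    have hrxy : w x / (w x + β) < w y / (w y + β) := by
      rw [div_lt_div_iff₀ (hden x hx) (hden y hy)]
      nlinarith [hwnn x hx]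
    have := pow_lt_pow_left₀ hrxy (hrnn x hx) (n := 2) (by norm_num)
    exact mul_lt_mul_of_pos_left this hC
  -- bounds
  have hbound : ∀ V : ℝ, 0 < V → 0 < gamFun β p V ∧ gamFun β p V < C := by
    intro V hV
    rw [key V hV.le]
    constructor
    · positivity
    · have h1 := hr01 V hV.le
      have h2 := hrnn V hV.le
      have hr2 : (w V / (w V + β)) ^ 2 < 1 := by nlinarith
      calc C * (w V / (w V + β)) ^ 2 < C * 1 := mul_lt_mul_of_pos_left hr2 hC
        _ = C := mul_one C
  refine ⟨hcont, hmono, hbound, ?_⟩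
  -- IsLUB
  constructor
  · rintro y ⟨V, hV, rfl⟩
    exact (hbound V hV).2.le
  · intro b hb
    -- limit argument
    have hwtop : Filter.Tendsto w Filter.atTop Filter.atTop := by
      apply (tendsto_rpow_atTop hq0).comp
      exact Filter.tendsto_id.const_mul_atTop two_pos
    have hfrac : Filter.Tendsto (fun V => β / (w V + β)) Filter.atTop (nhds 0) := by
      apply Filter.Tendsto.div_atTop tendsto_const_nhds
      exact Filter.tendsto_atTop_add_const_right _ β hwtop
    have hr1 : Filter.Tendsto (fun V => w V / (w V + β)) Filter.atTop (nhds 1) := by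
      have h1 : Filter.Tendsto (fun V => 1 - β / (w V + β)) Filter.atTop (nhds 1) := by
        simpa using tendsto_const_nhds.sub hfrac
      apply h1.congr'
      filter_upwards [Filter.eventually_ge_atTop (1:ℝ)] with V hV
      have hd := hden V (by linarith)
      field_simp
      ring
    have hlim : Filter.Tendsto (gamFun β p) Filter.atTop (nhds C) := by
      have h2 : Filter.Tendsto (fun V => C * (w V / (w V + β)) ^ 2)
          Filter.atTop (nhds (C * 1 ^ 2)) := tendsto_const_nhds.mul (hr1.pow 2)
      simp only [one_pow, mul_one] at h2
      apply h2.congr'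
      filter_upwards [Filter.eventually_ge_atTop (1:ℝ)] with V hV
      exact (key V (by linarith)).symm
    apply le_of_tendsto hlim
    filter_upwards [Filter.eventually_gt_atTop (0:ℝ)] with V hV
    exact hb ⟨V, hV, rfl⟩
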